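/- If ∇¹, ∇², ∇³ are flat linear connections (R_{∇^{(i)}} = 0) on a Lie–Rinehart algebra, then the curvature of the ternary product ∇ := ∇¹ − ∇² + ∇³ is given by R_∇(u,v)w = 2∇²_{[u,v]}w + Σ_{i≠j} (−1)^{i+j} [∇^{(i)}_u, ∇^{(j)}_v]w; in particular the set of flat connections need not be closed under the ternary heap operation. -/
import Mathlib


/-- A linear connection on an anchored module `(L, ρ)` over an `R`-algebra `A`. -/
def IsConn {R A L : Type*} [CommRing R] [CommRing A] [Algebra R A]
    [AddCommGroup L] [Module R L] [Module A L]
    (ρ : L →ₗ[A] Derivation R A A) (D : L → L → L) : Prop :=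
  (∀ u v w : L, D (u + v) w = D u w + D v w) ∧
  (∀ u v w : L, D u (v + w) = D u v + D u w) ∧
  (∀ (r : R) (u v : L), D (r • u) v = r • D u v) ∧
  (∀ (r : R) (u v : L), D u (r • v) = r • D u v) ∧
  (∀ (f : A) (u v : L), D (f • u) v = f • D u v) ∧
  (∀ (f : A) (u v : L), D u (f • v) = ρ u f • v + f • D u v)

/-- `(L, ρ, ⁅-,-⁆)` is a Lie–Rinehart algebra: the anchor is a homomorphism of
Lie algebras and the Leibniz rule `⁅u, f • v⁆ = ρ u f • v + f • ⁅u,v⁆` holds. -/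
def IsLieRinehart {R A L : Type*} [CommRing R] [CommRing A] [Algebra R A]
    [LieRing L] [LieAlgebra R L] [Module A L]
    (ρ : L →ₗ[A] Derivation R A A) : Prop :=
  (∀ u v : L, ρ ⁅u, v⁆ = ⁅ρ u, ρ v⁆) ∧
  (∀ (u : L) (f : A) (v : L), ⁅u, f • v⁆ = ρ u f • v + f • ⁅u, v⁆)

/-- The torsion of a connection `D` on a Lie–Rinehart algebra. -/
def Tor {L : Type*} [LieRing L] (D : L → L → L) : L → L → L :=
  fun u v => D u v - D v u - ⁅u, v⁆

/-- The curvature of a connection `D` on a Lie–Rinehart algebra. -/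
def Curv {L : Type*} [LieRing L] (D : L → L → L) : L → L → L → L :=
  fun u v w => D u (D v w) - D v (D u w) - D ⁅u, v⁆ w

/-- The commutator `[P,Q] := P∘Q - Q∘P` of two maps `L → L`. -/
def commMap {L : Type*} [AddCommGroup L] (P Q : L → L) : L → L :=
  fun w => P (Q w) - Q (P w)

/-- If `∇¹, ∇², ∇³` are flat, the curvature of `∇¹ - ∇² + ∇³` is
`2∇²_{[u,v]} + Σ_{i≠j} (-1)^{i+j} [∇⁽ⁱ⁾_u, ∇⁽ʲ⁾_v]`; in particular flat
connections need not be closed under the ternary operation. -/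
theorem curvature_tern_flat {R A L : Type*} [CommRing R] [CommRing A] [Algebra R A]
    [LieRing L] [LieAlgebra R L] [Module A L]
    (ρ : L →ₗ[A] Derivation R A A) (hLR : IsLieRinehart ρ)
    (D₁ D₂ D₃ : L → L → L)
    (h₁ : IsConn ρ D₁) (h₂ : IsConn ρ D₂) (h₃ : IsConn ρ D₃)
    (f₁ : Curv D₁ = 0) (f₂ : Curv D₂ = 0) (f₃ : Curv D₃ = 0) :
    ∀ u v w : L,
      Curv (D₁ - D₂ + D₃) u v w
        = (2 : ℤ) • D₂ ⁅u, v⁆ w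
          + (- commMap (D₁ u) (D₂ v) w + commMap (D₁ u) (D₃ v) w
             - commMap (D₂ u) (D₁ v) w - commMap (D₂ u) (D₃ v) w
             + commMap (D₃ u) (D₁ v) w - commMap (D₃ u) (D₂ v) w) := by
  intro u v w
  obtain ⟨-, ha₁, -, -, -, -⟩ := h₁
  obtain ⟨-, ha₂, -, -, -, -⟩ := h₂
  obtain ⟨-, ha₃, -, -, -, -⟩ := h₃
  have hs : ∀ (D : L → L → L), (∀ u v w : L, D u (v + w) = D u v + D u w) →
      ∀ (a x y z : L), D a (x - y + z) = D a x - D a y + D a z := by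
    intro D h a x y z
    have hsub : ∀ x y : L, D a (x - y) = D a x - D a y := by
      intro x y
      have h2 := h a (x - y) y
      rw [sub_add_cancel] at h2
      rw [eq_sub_iff_add_eq, ← h2]
    rw [h, hsub]
  have F : ∀ (D : L → L → L), Curv D = 0 → ∀ a b c : L,
      D a (D b c) = D b (D a c) + D ⁅a, b⁆ c := by
    intro D hD a b c
    have h := congrFun (congrFun (congrFun hD a) b) c
    simp only [Curv, Pi.zero_apply, sub_sub, sub_eq_zero] at h
    exact h
  simp only [Curv, Pi.add_apply, Pi.sub_apply, commMap]
  rw [hs D₁ ha₁, hs D₂ ha₂, hs D₃ ha₃, hs D₁ ha₁, hs D₂ ha₂, hs D₃ ha₃]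
  rw [F D₁ f₁ u v w, F D₂ f₂ u v w, F D₃ f₃ u v w]
  abel
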